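/- The function V(L) defined by 2L·V(L) = ∫₀^∞ x H(L,2x) dx satisfies V(L) = 1/8 for all L > 0; equivalently, ∫₀^∞ x H(L, 2x) dx = L/4. -/

import Mathlib

open Real MeasureTheory Set Filter Topology

/-- The kernel `H(x,y) = (1/(4π))(1/cosh((x−y)/4) − 1/cosh((x+y)/4))`. -/
noncomputable def Hker (x y : ℝ) : ℝ :=
  (1 / (4 * Real.pi)) *
    (1 / Real.cosh ((x - y) / 4) - 1 / Real.cosh ((x + y) / 4))

namespace Stmt9Aux

lemma cosh_inv_le (u : ℝ) : (Real.cosh u)⁻¹ ≤ 2 * Real.exp (-|u|) := by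
  rw [← Real.cosh_abs]
  have h1 : Real.exp |u| / 2 ≤ Real.cosh |u| := by
    rw [Real.cosh_eq]
    have := (Real.exp_pos (-|u|)).le
    linarith
  have h2 : (0:ℝ) < Real.exp |u| / 2 := by positivity
  calc (Real.cosh |u|)⁻¹ ≤ (Real.exp |u| / 2)⁻¹ := by
        exact inv_anti₀ h2 h1
    _ = 2 * Real.exp (-|u|) := by
        rw [Real.exp_neg]; field_simp

lemma integrable_exp_half : Integrable (fun u : ℝ => Real.exp (-(2⁻¹ * |u|))) := by
  have hIoi : IntegrableOn (fun u : ℝ => Real.exp (-(2⁻¹ * |u|))) (Ioi 0) := by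
    refine (exp_neg_integrableOn_Ioi 0 (by norm_num : (0:ℝ) < 2⁻¹)).congr_fun
      (fun x hx => ?_) measurableSet_Ioi
    rw [abs_of_pos hx]; simp only [neg_mul]
  have m : MeasurableEmbedding fun x : ℝ => -x :=
    (Homeomorph.neg ℝ).measurableEmbedding
  have hIic : IntegrableOn (fun u : ℝ => Real.exp (-(2⁻¹ * |u|))) (Iic 0) := by
    rw [← Measure.map_neg_eq_self (volume : Measure ℝ), m.integrableOn_map_iff]
    simp only [Function.comp_def, abs_neg, neg_preimage, neg_Iic, neg_zero]
    exact Iff.mpr integrableOn_Ici_iff_integrableOn_Ioi hIoi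
  have hU : Iic (0:ℝ) ∪ Ioi 0 = univ := Iic_union_Ioi
  rw [← integrableOn_univ, ← hU]
  exact hIic.union hIoi


lemma integrable_sech : Integrable (fun u : ℝ => (Real.cosh u)⁻¹) := by
  refine Integrable.mono' (integrable_exp_half.const_mul 4)
    ((Real.continuous_cosh.inv₀ fun x => (Real.cosh_pos x).ne').aestronglyMeasurable)
    (Filter.Eventually.of_forall fun u => ?_)
  have h1 := cosh_inv_le u
  have h2 : Real.exp (-|u|) ≤ Real.exp (-(2⁻¹ * |u|)) := by
    apply Real.exp_le_exp.mpr
    have := abs_nonneg u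
    linarith
  have h3 : (0:ℝ) < Real.cosh u := Real.cosh_pos u
  rw [Real.norm_eq_abs, abs_of_pos (inv_pos.mpr h3)]
  nlinarith [Real.exp_pos (-(2⁻¹ * |u|))]

lemma integrable_phi : Integrable (fun u : ℝ => u * (Real.cosh u)⁻¹) := by
  refine Integrable.mono' (integrable_exp_half.const_mul 4)
    ((continuous_id.mul (Real.continuous_cosh.inv₀ fun x =>
      (Real.cosh_pos x).ne')).aestronglyMeasurable)
    (Filter.Eventually.of_forall fun u => ?_)
  have h1 := cosh_inv_le u
  have h3 : (0:ℝ) < Real.cosh u := Real.cosh_pos u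
  have hE : Real.exp (-|u|) = Real.exp (-(2⁻¹ * |u|)) * Real.exp (-(2⁻¹ * |u|)) := by
    rw [← Real.exp_add]; ring_nf
  have hb : |u| * Real.exp (-(2⁻¹ * |u|)) ≤ 2 := by
    have h4 : 2⁻¹ * |u| + 1 ≤ Real.exp (2⁻¹ * |u|) := Real.add_one_le_exp _
    have h5 : Real.exp (-(2⁻¹ * |u|)) = (Real.exp (2⁻¹ * |u|))⁻¹ := by
      rw [← Real.exp_neg]
    have h6 : (0:ℝ) < Real.exp (2⁻¹ * |u|) := Real.exp_pos _
    rw [h5]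
    rw [mul_inv_le_iff₀ h6]
    nlinarith [abs_nonneg u]
  rw [Real.norm_eq_abs, abs_mul, abs_of_pos (inv_pos.mpr h3)]
  calc |u| * (Real.cosh u)⁻¹ ≤ |u| * (2 * Real.exp (-|u|)) := by
        exact mul_le_mul_of_nonneg_left h1 (abs_nonneg u)
    _ = 2 * (|u| * Real.exp (-(2⁻¹ * |u|))) * Real.exp (-(2⁻¹ * |u|)) := by
        rw [hE]; ring
    _ ≤ 2 * 2 * Real.exp (-(2⁻¹ * |u|)) := by
        have := Real.exp_pos (-(2⁻¹ * |u|))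
        nlinarith
    _ = 4 * Real.exp (-(2⁻¹ * |u|)) := by ring

lemma hasDerivAt_arctan_sinh (x : ℝ) :
    HasDerivAt (fun u => Real.arctan (Real.sinh u)) ((Real.cosh x)⁻¹) x := by
  have h := (Real.hasDerivAt_arctan (Real.sinh x)).comp x (Real.hasDerivAt_sinh x)
  refine h.congr_deriv ?_
  have hc : (0:ℝ) < Real.cosh x := Real.cosh_pos x
  have hsq : (1:ℝ) + Real.sinh x ^ 2 = Real.cosh x ^ 2 := by
    rw [Real.cosh_sq]; ring
  rw [hsq]
  field_simp

lemma tendsto_sinh_atTop : Tendsto Real.sinh atTop atTop := by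
  apply tendsto_atTop_mono' atTop (Filter.eventually_atTop.mpr ⟨0, fun x hx => ?_⟩)
    (Filter.Tendsto.atTop_div_const (by norm_num : (0:ℝ) < 2)
      (Filter.tendsto_atTop_add_const_right atTop (-1) Real.tendsto_exp_atTop))
  rw [Real.sinh_eq]
  have : Real.exp (-x) ≤ 1 := by
    rw [Real.exp_le_one_iff]; linarith
  linarith

lemma tendsto_sinh_atBot : Tendsto Real.sinh atBot atBot := by
  have h := (tendsto_neg_atTop_atBot.comp tendsto_sinh_atTop).comp tendsto_neg_atBot_atTop
  refine h.congr fun x => ?_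
  simp [Function.comp, Real.sinh_neg]

lemma tendsto_arctan_sinh_atTop :
    Tendsto (fun u => Real.arctan (Real.sinh u)) atTop (nhds (π / 2)) :=
  (tendsto_nhds_of_tendsto_nhdsWithin Real.tendsto_arctan_atTop).comp tendsto_sinh_atTop

lemma tendsto_arctan_sinh_atBot :
    Tendsto (fun u => Real.arctan (Real.sinh u)) atBot (nhds (-(π / 2))) :=
  (tendsto_nhds_of_tendsto_nhdsWithin Real.tendsto_arctan_atBot).comp tendsto_sinh_atBot

lemma integral_sech_total : (∫ u : ℝ, (Real.cosh u)⁻¹) = π := by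
  have hIoi : (∫ u in Ioi (0:ℝ), (Real.cosh u)⁻¹) = π / 2 := by
    have := integral_Ioi_of_hasDerivAt_of_tendsto' (a := (0:ℝ))
      (fun x _ => hasDerivAt_arctan_sinh x) integrable_sech.integrableOn
      tendsto_arctan_sinh_atTop
    simpa using this
  have hIic : (∫ u in Iic (0:ℝ), (Real.cosh u)⁻¹) = π / 2 := by
    have := integral_Iic_of_hasDerivAt_of_tendsto' (a := (0:ℝ))
      (fun x _ => hasDerivAt_arctan_sinh x) integrable_sech.integrableOn
      tendsto_arctan_sinh_atBot
    simpa using this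
  rw [← intervalIntegral.integral_Iic_add_Ioi (integrable_sech.integrableOn) (integrable_sech.integrableOn),
    hIoi, hIic]
  ring

lemma shift (c : ℝ) (f : ℝ → ℝ) :
    (∫ x in Ioi (0:ℝ), f (x + c)) = ∫ u in Ioi c, f u := by
  have mp : MeasurePreserving (fun x : ℝ => x + c) volume volume :=
    measurePreserving_add_right volume c
  have me : MeasurableEmbedding (fun x : ℝ => x + c) :=
    (Homeomorph.addRight c).measurableEmbedding
  have h := mp.setIntegral_preimage_emb me f (Ioi c)
  rw [show (fun x : ℝ => x + c) ⁻¹' (Ioi c) = Ioi 0 by ext x; simp] at h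
  exact h


lemma integrable_shifted (c : ℝ) :
    Integrable (fun u : ℝ => (u + c) * (Real.cosh u)⁻¹) := by
  have h := integrable_phi.add (integrable_sech.const_mul c)
  refine h.congr (Filter.Eventually.of_forall fun u => ?_)
  simp only [Pi.add_apply]
  ring

lemma core (a : ℝ) (ha : 0 < a) :
    (∫ t in Ioi (0:ℝ), t * ((Real.cosh (t - a))⁻¹ - (Real.cosh (t + a))⁻¹)) = a * π := by
  -- integrability of the two pieces
  have f1 : Integrable (fun t : ℝ => t * (Real.cosh (t - a))⁻¹) := by
    have h := (integrable_shifted a).comp_add_right (-a)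
    refine h.congr (Filter.Eventually.of_forall fun t => ?_)
    simp only [← sub_eq_add_neg, sub_add_cancel]
  have f2 : Integrable (fun t : ℝ => t * (Real.cosh (t + a))⁻¹) := by
    have h := (integrable_shifted (-a)).comp_add_right a
    refine h.congr (Filter.Eventually.of_forall fun t => ?_)
    simp only [add_neg_cancel_right]
  -- split the integral
  have hsplit : (∫ t in Ioi (0:ℝ), t * ((Real.cosh (t - a))⁻¹ - (Real.cosh (t + a))⁻¹))
      = (∫ t in Ioi (0:ℝ), t * (Real.cosh (t - a))⁻¹)
        - ∫ t in Ioi (0:ℝ), t * (Real.cosh (t + a))⁻¹ := by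
    rw [← integral_sub f1.integrableOn f2.integrableOn]
    refine setIntegral_congr_fun measurableSet_Ioi fun t _ => ?_
    ring
  -- shift each piece
  have e1 : (∫ t in Ioi (0:ℝ), t * (Real.cosh (t - a))⁻¹)
      = ∫ u in Ioi (-a), (u + a) * (Real.cosh u)⁻¹ := by
    rw [← shift (-a) (fun u => (u + a) * (Real.cosh u)⁻¹)]
    refine setIntegral_congr_fun measurableSet_Ioi fun x _ => ?_
    simp only [neg_add_cancel_right, sub_eq_add_neg]
  have e2 : (∫ t in Ioi (0:ℝ), t * (Real.cosh (t + a))⁻¹)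
      = ∫ u in Ioi a, (u - a) * (Real.cosh u)⁻¹ := by
    rw [← shift a (fun u => (u - a) * (Real.cosh u)⁻¹)]
    refine setIntegral_congr_fun measurableSet_Ioi fun x _ => ?_
    simp only [add_sub_cancel_right]
  -- expand
  have e3 : (∫ u in Ioi (-a), (u + a) * (Real.cosh u)⁻¹)
      = (∫ u in Ioi (-a), u * (Real.cosh u)⁻¹) + a * ∫ u in Ioi (-a), (Real.cosh u)⁻¹ := by
    rw [← integral_const_mul, ← integral_add integrable_phi.integrableOn
      ((integrable_sech.const_mul a).integrableOn)]
    refine setIntegral_congr_fun measurableSet_Ioi fun u _ => ?_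
    ring
  have e4 : (∫ u in Ioi a, (u - a) * (Real.cosh u)⁻¹)
      = (∫ u in Ioi a, u * (Real.cosh u)⁻¹) - a * ∫ u in Ioi a, (Real.cosh u)⁻¹ := by
    rw [← integral_const_mul, ← integral_sub integrable_phi.integrableOn
      ((integrable_sech.const_mul a).integrableOn)]
    refine setIntegral_congr_fun measurableSet_Ioi fun u _ => ?_
    ring
  -- odd part
  have hphi : (∫ u in Ioi (-a), u * (Real.cosh u)⁻¹)
      = ∫ u in Ioi a, u * (Real.cosh u)⁻¹ := by
    have hun : Ioc (-a) a ∪ Ioi a = Ioi (-a) := Ioc_union_Ioi_eq_Ioi (by linarith)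
    have hdis : Disjoint (Ioc (-a) a) (Ioi a) := Ioc_disjoint_Ioi le_rfl
    have hsum := setIntegral_union hdis measurableSet_Ioi
      (integrable_phi.integrableOn (s := Ioc (-a) a))
      (integrable_phi.integrableOn (s := Ioi a))
    rw [hun] at hsum
    have hodd : (∫ u in Ioc (-a) a, u * (Real.cosh u)⁻¹) = 0 := by
      rw [← intervalIntegral.integral_of_le (by linarith : -a ≤ a)]
      have h := intervalIntegral.integral_comp_neg (a := -a) (b := a)
        (fun u => u * (Real.cosh u)⁻¹)
      simp only [neg_neg, Real.cosh_neg, neg_mul] at h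
      rw [intervalIntegral.integral_neg] at h
      linarith
    rw [hsum, hodd, zero_add]
  -- even part
  have hsech : (∫ u in Ioi (-a), (Real.cosh u)⁻¹) + (∫ u in Ioi a, (Real.cosh u)⁻¹) = π := by
    have h1 : (∫ u in Ioi a, (Real.cosh u)⁻¹) = ∫ u in Iic (-a), (Real.cosh u)⁻¹ := by
      rw [← integral_comp_neg_Ioi]
      refine setIntegral_congr_fun measurableSet_Ioi fun u _ => ?_
      rw [Real.cosh_neg]
    rw [h1, add_comm, intervalIntegral.integral_Iic_add_Ioi
      integrable_sech.integrableOn integrable_sech.integrableOn, integral_sech_total]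
  rw [hsplit, e1, e2, e3, e4, hphi]
  nlinarith [hsech]

end Stmt9Aux

/-- For every `L > 0`, `∫₀^∞ x H(L, 2x) dx = L/4`; equivalently, the function
`V(L)` defined by `2L·V(L) = ∫₀^∞ x H(L,2x) dx` satisfies `V(L) = 1/8`. -/
theorem stmt9 (L : ℝ) (hL : 0 < L) :
    (∫ x in Set.Ioi (0 : ℝ), x * Hker L (2 * x)) = L / 4 ∧
    (∫ x in Set.Ioi (0 : ℝ), x * Hker L (2 * x)) / (2 * L) = 1 / 8 := by
  set a : ℝ := L / 4 with ha
  have ha0 : 0 < a := by positivity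
  have hmain : (∫ x in Set.Ioi (0 : ℝ), x * Hker L (2 * x)) = L / 4 := by
    have step1 : (∫ x in Set.Ioi (0 : ℝ), x * Hker L (2 * x))
        = (1 / (4 * π)) * ∫ x in Set.Ioi (0 : ℝ),
            (fun t : ℝ => 2 * t * ((Real.cosh (t - a))⁻¹ - (Real.cosh (t + a))⁻¹)) (2⁻¹ * x) := by
      rw [← integral_const_mul]
      refine setIntegral_congr_fun measurableSet_Ioi fun x _ => ?_
      simp only [Hker, one_div]
      have harg1 : (L - 2 * x) / 4 = -(2⁻¹ * x - a) := by rw [ha]; ring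
      have harg2 : (L + 2 * x) / 4 = 2⁻¹ * x + a := by rw [ha]; ring
      rw [harg1, harg2, Real.cosh_neg]
      ring
    have step2 : (∫ x in Set.Ioi (0 : ℝ),
          (fun t : ℝ => 2 * t * ((Real.cosh (t - a))⁻¹ - (Real.cosh (t + a))⁻¹)) (2⁻¹ * x))
        = 2 * ∫ t in Set.Ioi (0 : ℝ),
            2 * t * ((Real.cosh (t - a))⁻¹ - (Real.cosh (t + a))⁻¹) := by
      have h := integral_comp_mul_left_Ioi
        (fun t : ℝ => 2 * t * ((Real.cosh (t - a))⁻¹ - (Real.cosh (t + a))⁻¹)) 0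
        (by norm_num : (0:ℝ) < 2⁻¹)
      simp only [mul_zero, smul_eq_mul] at h
      rw [h]
      norm_num
    have step3 : (∫ t in Set.Ioi (0 : ℝ),
          2 * t * ((Real.cosh (t - a))⁻¹ - (Real.cosh (t + a))⁻¹)) = 2 * (a * π) := by
      rw [← Stmt9Aux.core a ha0, ← integral_const_mul]
      refine setIntegral_congr_fun measurableSet_Ioi fun t _ => ?_
      ring
    rw [step1, step2, step3]
    have hπ : π ≠ 0 := Real.pi_ne_zero
    rw [ha]
    field_simp
    ring
  refine ⟨hmain, ?_⟩
  rw [hmain]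
  have : L ≠ 0 := ne_of_gt hL
  field_simp
  ring
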